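/- arXiv:2305.06619 — 4 statements merged into one kernel-verified Lean document; each statement's English description precedes it below -/
import Mathlib

section
/- For any positive integers k and m with 1 ≤ m ≤ 2^k, the minimum of |Im φ1| over all admissible k-shot codes (φ1, φ2) for the model (01;C1,C2;f) satisfying |Im φ2| = m equals the minimum, over all partitions {P_1, …, P_m} of A^k into m nonempty blocks, of max_{1 ≤ i ≤ m} χ(G(A^k, P_i)), where χ(G(A^k, P_i)) is the minimum chromatic number of the conflict graph G(A^k, P_i). -/
/-!
Statement 11: For positive integers k and m with 1 ≤ m ≤ 2^k, the minimum of |Im φ1| over all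
admissible k-shot codes (φ1, φ2) for the model (01;C1,C2;f) with |Im φ2| = m equals the minimum,
over all partitions {P_1, …, P_m} of A^k into m nonempty blocks, of
max_{1 ≤ i ≤ m} χ(G(A^k, P_i)), where χ denotes the minimum chromatic number of the conflict
graph. Both minima are stated in ℕ∞ via `sInf`.
-/

/-- The componentwise integer sum of two binary vectors. -/
def vsum {k : ℕ} (x y : Fin k → Fin 2) : Fin k → ℕ := fun i => (x i : ℕ) + (y i : ℕ)

/-- The cardinality of the image of an encoding map defined on `A^k × A^k`. -/
def imCard1 {k : ℕ} (φ : (Fin k → Fin 2) × (Fin k → Fin 2) → ℕ) : ℕ :=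
  (Finset.univ.image φ).card

/-- The cardinality of the image of an encoding map defined on `A^k`. -/
def imCard2 {k : ℕ} (φ : (Fin k → Fin 2) → ℕ) : ℕ := (Finset.univ.image φ).card

/-- Admissibility for the model (01;C1,C2;f). -/
def Admissible01 {k : ℕ} (φ1 : (Fin k → Fin 2) × (Fin k → Fin 2) → ℕ)
    (φ2 : (Fin k → Fin 2) → ℕ) : Prop :=
  ∀ x x' y y' : Fin k → Fin 2,
    φ1 (x, y) = φ1 (x', y') → φ2 y = φ2 y' → vsum x y = vsum x' y'

/-- The conflict graph G(M,L): vertices are pairs (x, y) ∈ M × L, with an edge between two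
vertices (x, y) and (x', y') iff x + y ≠ x' + y'. -/
def conflictGraph {k : ℕ} (M L : Finset (Fin k → Fin 2)) :
    SimpleGraph {p : (Fin k → Fin 2) × (Fin k → Fin 2) // p.1 ∈ M ∧ p.2 ∈ L} where
  Adj v w := vsum v.1.1 v.1.2 ≠ vsum w.1.1 w.1.2
  symm := ⟨fun _ _ h => Ne.symm h⟩
  loopless := ⟨fun _ h => h rfl⟩

/-- The sumset `M + L` with `M = A^k`, as a Finset of integer vectors. -/
def sumFinset {k : ℕ} (L : Finset (Fin k → Fin 2)) : Finset (Fin k → ℕ) :=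
  (Finset.univ ×ˢ L).image fun p => vsum p.1 p.2

/-- If `g` factors through `f` on `T`, then the image of `g` is no larger than that of `f`. -/
lemma card_image_le_image {α β γ : Type*} [DecidableEq β] [DecidableEq γ]
    (T : Finset α) (f : α → β) (g : α → γ)
    (h : ∀ p ∈ T, ∀ q ∈ T, f p = f q → g p = g q) :
    (T.image g).card ≤ (T.image f).card := by
  classical
  rcases T.eq_empty_or_nonempty with rfl | ⟨a0, _⟩
  · simp
  refine Finset.card_le_card_of_injOn
    (fun c => f (if hc : ∃ p, p ∈ T ∧ g p = c then hc.choose else a0)) ?_ ?_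
  · intro c hc
    obtain ⟨p, hp, hgp⟩ := Finset.mem_image.mp hc
    have hex : ∃ p, p ∈ T ∧ g p = c := ⟨p, hp, hgp⟩
    simp only [dif_pos hex]
    exact Finset.mem_image_of_mem f hex.choose_spec.1
  · intro c hc c' hc' hfe
    obtain ⟨p, hp, hgp⟩ := Finset.mem_image.mp hc
    obtain ⟨p', hp', hgp'⟩ := Finset.mem_image.mp hc'
    have hex : ∃ q, q ∈ T ∧ g q = c := ⟨p, hp, hgp⟩
    have hex' : ∃ q, q ∈ T ∧ g q = c' := ⟨p', hp', hgp'⟩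
    simp only [dif_pos hex, dif_pos hex'] at hfe
    have := h _ hex.choose_spec.1 _ hex'.choose_spec.1 hfe
    rw [hex.choose_spec.2, hex'.choose_spec.2] at this
    exact this

/-- The chromatic number of the conflict graph `G(A^k, L)` equals `|A^k + L|`. -/
lemma chi_eq {k : ℕ} (L : Finset (Fin k → Fin 2)) :
    (conflictGraph (Finset.univ : Finset (Fin k → Fin 2)) L).chromaticNumber
      = ((sumFinset L).card : ℕ∞) := by
  classical
  have hmem : ∀ v : {p : (Fin k → Fin 2) × (Fin k → Fin 2) //
      p.1 ∈ (Finset.univ : Finset (Fin k → Fin 2)) ∧ p.2 ∈ L},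
      vsum v.1.1 v.1.2 ∈ sumFinset L := fun v =>
    Finset.mem_image.mpr ⟨(v.1.1, v.1.2),
      Finset.mem_product.mpr ⟨Finset.mem_univ _, v.2.2⟩, rfl⟩
  apply le_antisymm
  · -- upper bound: color by the sum
    have C : (conflictGraph Finset.univ L).Coloring (Fin (sumFinset L).card) :=
      SimpleGraph.Coloring.mk
        (fun v => (sumFinset L).equivFin ⟨vsum v.1.1 v.1.2, hmem v⟩)
        (by
          intro v w hadj heq
          exact hadj (congrArg Subtype.val ((sumFinset L).equivFin.injective heq)))
    exact SimpleGraph.Colorable.chromaticNumber_le ⟨C⟩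
  · -- lower bound
    rw [SimpleGraph.chromaticNumber_eq_biInf]
    refine le_iInf₂ fun n hn => ?_
    obtain ⟨C⟩ := hn
    have key := card_image_le_image (Finset.univ :
        Finset {p : (Fin k → Fin 2) × (Fin k → Fin 2) //
          p.1 ∈ (Finset.univ : Finset (Fin k → Fin 2)) ∧ p.2 ∈ L})
      (fun v => C v) (fun v => vsum v.1.1 v.1.2)
      (by
        intro p _ q _ hC
        by_contra hne
        exact C.valid hne hC)
    have himg : (Finset.univ.image (fun v : {p : (Fin k → Fin 2) × (Fin k → Fin 2) //
        p.1 ∈ (Finset.univ : Finset (Fin k → Fin 2)) ∧ p.2 ∈ L} => vsum v.1.1 v.1.2))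
        = sumFinset L := by
      apply Finset.Subset.antisymm
      · intro s hs
        obtain ⟨v, _, rfl⟩ := Finset.mem_image.mp hs
        exact hmem v
      · intro s hs
        obtain ⟨p, hp, rfl⟩ := Finset.mem_image.mp hs
        exact Finset.mem_image.mpr
          ⟨⟨p, ⟨Finset.mem_univ _, (Finset.mem_product.mp hp).2⟩⟩, Finset.mem_univ _, rfl⟩
    rw [himg] at key
    have hle : (sumFinset L).card ≤ n := by
      calc (sumFinset L).card ≤ (Finset.univ.image (fun v => C v)).card := key
        _ ≤ (Finset.univ : Finset (Fin n)).card := Finset.card_le_univ _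
        _ = n := by simp
    exact_mod_cast hle

set_option maxHeartbeats 1000000 in
theorem chi_m_eq_min_partition (k m : ℕ) (hk : 0 < k) (hm : 1 ≤ m) (hm' : m ≤ 2 ^ k) :
    sInf {n : ℕ∞ | ∃ (φ1 : (Fin k → Fin 2) × (Fin k → Fin 2) → ℕ)
        (φ2 : (Fin k → Fin 2) → ℕ),
        Admissible01 φ1 φ2 ∧ imCard2 φ2 = m ∧ n = (imCard1 φ1 : ℕ∞)} =
    sInf {n : ℕ∞ | ∃ P : Fin m → Finset (Fin k → Fin 2),
        (∀ i, (P i).Nonempty) ∧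
        (∀ i j, i ≠ j → Disjoint (P i) (P j)) ∧
        (Finset.univ.biUnion P = (Finset.univ : Finset (Fin k → Fin 2))) ∧
        n = Finset.univ.sup
          (fun i => (conflictGraph (Finset.univ : Finset (Fin k → Fin 2)) (P i)).chromaticNumber)} := by
  classical
  have hmne : Nonempty (Fin m) := ⟨⟨0, hm⟩⟩
  apply le_antisymm
  · -- codes ≤ partitions : from each partition build a code
    refine le_sInf fun b hb => ?_
    obtain ⟨P, hne, hdisj, hcover, rfl⟩ := hb
    -- index of the block containing y
    have hindex : ∀ y : Fin k → Fin 2, ∃ i, y ∈ P i := by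
      intro y
      have : y ∈ Finset.univ.biUnion P := by rw [hcover]; exact Finset.mem_univ y
      obtain ⟨i, _, hi⟩ := Finset.mem_biUnion.mp this
      exact ⟨i, hi⟩
    set ind : (Fin k → Fin 2) → Fin m := fun y => (hindex y).choose with hind_def
    have hind : ∀ y, y ∈ P (ind y) := fun y => (hindex y).choose_spec
    have hind_unique : ∀ y i, y ∈ P i → ind y = i := by
      intro y i hy
      by_contra hne'
      exact Finset.disjoint_left.mp (hdisj _ _ hne') (hind y) hy
    set φ2 : (Fin k → Fin 2) → ℕ := fun y => (ind y : ℕ) with hφ2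
    set φ1 : (Fin k → Fin 2) × (Fin k → Fin 2) → ℕ :=
      fun p => (sumFinset (P (ind p.2))).toList.idxOf (vsum p.1 p.2) with hφ1
    have hsummem : ∀ x y : Fin k → Fin 2, vsum x y ∈ sumFinset (P (ind y)) := fun x y =>
      Finset.mem_image.mpr ⟨(x, y), Finset.mem_product.mpr ⟨Finset.mem_univ _, hind y⟩, rfl⟩
    have hadm : Admissible01 φ1 φ2 := by
      intro x x' y y' h1 h2
      have hiy : ind y = ind y' := Fin.val_injective h2
      rw [hφ1] at h1
      simp only [hiy] at h1
      have m1 : vsum x y ∈ (sumFinset (P (ind y'))).toList :=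
        Finset.mem_toList.mpr (hiy ▸ hsummem x y)
      have m2 : vsum x' y' ∈ (sumFinset (P (ind y'))).toList :=
        Finset.mem_toList.mpr (hsummem x' y')
      exact (List.idxOf_inj (y := vsum x' y') m1).mp h1
    have him2 : imCard2 φ2 = m := by
      have : Finset.univ.image φ2 = Finset.univ.image (fun i : Fin m => (i : ℕ)) := by
        apply Finset.Subset.antisymm
        · intro n hn
          obtain ⟨y, _, rfl⟩ := Finset.mem_image.mp hn
          exact Finset.mem_image.mpr ⟨ind y, Finset.mem_univ _, rfl⟩
        · intro n hn
          obtain ⟨i, _, rfl⟩ := Finset.mem_image.mp hn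
          obtain ⟨y, hy⟩ := hne i
          exact Finset.mem_image.mpr ⟨y, Finset.mem_univ _, by
            simp only [hφ2, hind_unique y i hy]⟩
      rw [imCard2, this, Finset.card_image_of_injective _ Fin.val_injective]
      simp
    -- bound the first image
    obtain ⟨i1, _, hi1⟩ := Finset.exists_mem_eq_sup (Finset.univ : Finset (Fin m))
      Finset.univ_nonempty (fun i => (sumFinset (P i)).card)
    have him1 : imCard1 φ1 ≤ (sumFinset (P i1)).card := by
      have hsub : Finset.univ.image φ1 ⊆ Finset.range ((sumFinset (P i1)).card) := by
        intro n hn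
        obtain ⟨p, _, rfl⟩ := Finset.mem_image.mp hn
        have hlt : φ1 p < (sumFinset (P (ind p.2))).card := by
          rw [hφ1]
          simp only
          rw [← Finset.length_toList]
          exact List.idxOf_lt_length_iff.mpr (Finset.mem_toList.mpr (hsummem p.1 p.2))
        refine Finset.mem_range.mpr (lt_of_lt_of_le hlt ?_)
        rw [← hi1]
        exact Finset.le_sup (f := fun i => (sumFinset (P i)).card) (Finset.mem_univ (ind p.2))
      calc imCard1 φ1 ≤ (Finset.range ((sumFinset (P i1)).card)).card :=
            Finset.card_le_card hsub
        _ = (sumFinset (P i1)).card := Finset.card_range _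
    refine le_trans (sInf_le ⟨φ1, φ2, hadm, him2, rfl⟩) ?_
    calc (imCard1 φ1 : ℕ∞) ≤ ((sumFinset (P i1)).card : ℕ∞) := by exact_mod_cast him1
      _ = (conflictGraph Finset.univ (P i1)).chromaticNumber := (chi_eq (P i1)).symm
      _ ≤ Finset.univ.sup
          (fun i => (conflictGraph (Finset.univ : Finset (Fin k → Fin 2)) (P i)).chromaticNumber) :=
        Finset.le_sup
          (f := fun i => (conflictGraph (Finset.univ : Finset (Fin k → Fin 2)) (P i)).chromaticNumber)
          (Finset.mem_univ i1)
  · -- partitions ≤ codes : from each code build a partition (fibers of φ2)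
    refine le_sInf fun a ha => ?_
    obtain ⟨φ1, φ2, hadm, him2, rfl⟩ := ha
    set I : Finset ℕ := Finset.univ.image φ2 with hI
    have hIcard : I.card = m := him2
    set e : Fin m → ℕ := fun i => (I.equivFin.symm (Fin.cast hIcard.symm i) : ℕ) with he
    have he_inj : Function.Injective e := by
      intro i j hij
      have := I.equivFin.symm.injective (Subtype.val_injective hij)
      exact Fin.cast_injective hIcard.symm |>.eq_iff.mp this
    set P : Fin m → Finset (Fin k → Fin 2) :=
      fun i => Finset.univ.filter (fun y => φ2 y = e i) with hP
    have hmemP : ∀ i y, y ∈ P i ↔ φ2 y = e i := by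
      intro i y
      simp [hP]
    have hne : ∀ i, (P i).Nonempty := by
      intro i
      have : e i ∈ I := (I.equivFin.symm (Fin.cast hIcard.symm i)).2
      obtain ⟨y, _, hy⟩ := Finset.mem_image.mp this
      exact ⟨y, (hmemP i y).mpr hy⟩
    have hdisj : ∀ i j, i ≠ j → Disjoint (P i) (P j) := by
      intro i j hij
      refine Finset.disjoint_left.mpr fun y hyi hyj => ?_
      exact hij (he_inj (((hmemP i y).mp hyi).symm.trans ((hmemP j y).mp hyj)))
    have hcover : Finset.univ.biUnion P = (Finset.univ : Finset (Fin k → Fin 2)) := by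
      apply Finset.Subset.antisymm (Finset.subset_univ _)
      intro y _
      have hyI : φ2 y ∈ I := Finset.mem_image_of_mem φ2 (Finset.mem_univ y)
      refine Finset.mem_biUnion.mpr ⟨Fin.cast hIcard (I.equivFin ⟨φ2 y, hyI⟩),
        Finset.mem_univ _, ?_⟩
      refine (hmemP _ y).mpr ?_
      have key : e (Fin.cast hIcard (I.equivFin ⟨φ2 y, hyI⟩)) = φ2 y := by
        show (I.equivFin.symm
          (Fin.cast hIcard.symm (Fin.cast hIcard (I.equivFin ⟨φ2 y, hyI⟩))) : ℕ) = φ2 y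
        rw [show Fin.cast hIcard.symm (Fin.cast hIcard (I.equivFin ⟨φ2 y, hyI⟩))
            = I.equivFin ⟨φ2 y, hyI⟩ from rfl, Equiv.symm_apply_apply]
      exact key.symm
    -- the bound
    have hbound : ∀ i : Fin m, ((sumFinset (P i)).card : ℕ∞) ≤ (imCard1 φ1 : ℕ∞) := by
      intro i
      have key := card_image_le_image (Finset.univ ×ˢ P i) φ1
        (fun p => vsum p.1 p.2)
        (by
          intro p hp q hq hpq
          have hp2 : φ2 p.2 = e i := (hmemP i p.2).mp (Finset.mem_product.mp hp).2
          have hq2 : φ2 q.2 = e i := (hmemP i q.2).mp (Finset.mem_product.mp hq).2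
          exact hadm p.1 q.1 p.2 q.2 (by simpa using hpq) (hp2.trans hq2.symm))
      have hsubI : ((Finset.univ ×ˢ P i).image φ1).card ≤ imCard1 φ1 :=
        Finset.card_le_card (Finset.image_subset_image (Finset.subset_univ _))
      have : (sumFinset (P i)).card ≤ imCard1 φ1 := le_trans key hsubI
      exact_mod_cast this
    refine le_trans (sInf_le ⟨P, hne, hdisj, hcover, rfl⟩) ?_
    refine Finset.sup_le fun i _ => ?_
    rw [chi_eq]
    exact hbound i
end

section
/- Let k be a positive integer and for 0 ≤ ℓ ≤ 2^k let Q_k(ℓ) be the minimum of |A^k + L| over all subsets L ⊆ A^k with |L| = ℓ. Then for any admissible k-shot code (φ1, φ2) for the model (01;C1,C2;f) with |Im φ2| = m (1 ≤ m ≤ 2^k), one has |Im φ1| ≥ Q_k(⌈2^k / m⌉). -/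
/-- The sumset `M + L = {x + y : x ∈ M, y ∈ L}` (componentwise integer sums). -/
def sumSet {k : ℕ} (M L : Finset (Fin k → Fin 2)) : Finset (Fin k → ℕ) :=
  (M ×ˢ L).image fun p => vsum p.1 p.2

/-- `Q_k(ℓ)`: the minimum of `|A^k + L|` over all subsets `L ⊆ A^k` with `|L| = ℓ`. -/
noncomputable def Qk (k ℓ : ℕ) : ℕ :=
  sInf {n : ℕ | ∃ L : Finset (Fin k → Fin 2), L.card = ℓ ∧
    n = (sumSet (Finset.univ : Finset (Fin k → Fin 2)) L).card}

theorem imCard1_ge_Qk (k m : ℕ) (hk : 0 < k) (hm : 1 ≤ m) (hm' : m ≤ 2 ^ k)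
    (φ1 : (Fin k → Fin 2) × (Fin k → Fin 2) → ℕ) (φ2 : (Fin k → Fin 2) → ℕ)
    (hadm : Admissible01 φ1 φ2) (him : imCard2 φ2 = m) :
    Qk k (2 ^ k ⌈/⌉ m) ≤ imCard1 φ1 := by
  classical
  set c := 2 ^ k ⌈/⌉ m with hc
  have hNpos : 1 ≤ 2 ^ k := Nat.one_le_two_pow
  have hc1 : 1 ≤ c := by
    rw [hc, Nat.ceilDiv_eq_add_pred_div]
    have : m ≤ 2 ^ k + m - 1 := by omega
    exact Nat.one_le_div_iff (by omega) |>.mpr this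
  have hmul : m * c ≤ 2 ^ k + m - 1 := by
    rw [hc, Nat.ceilDiv_eq_add_pred_div, Nat.mul_comm]
    exact Nat.div_mul_le_self _ _
  have hmc : m * (c - 1) < 2 ^ k := by
    have : m * (c - 1) = m * c - m := by
      rw [Nat.mul_sub, Nat.mul_one]
    omega
  have hcardu : (Finset.univ : Finset (Fin k → Fin 2)).card = 2 ^ k := by
    simp [Finset.card_univ]
  have hcardim : (Finset.univ.image φ2).card = m := him
  have hlt : (Finset.univ.image φ2).card * (c - 1)
      < (Finset.univ : Finset (Fin k → Fin 2)).card := by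
    rw [hcardim, hcardu]; exact hmc
  obtain ⟨b, hb, hfib⟩ := Finset.exists_lt_card_fiber_of_mul_lt_card_of_maps_to
    (fun y _ => Finset.mem_image_of_mem φ2 (Finset.mem_univ y)) hlt
  have hle : c ≤ (Finset.univ.filter fun y => φ2 y = b).card := by omega
  obtain ⟨L, hLsub, hLc⟩ := Finset.exists_subset_card_eq hle
  have hLb : ∀ y ∈ L, φ2 y = b := fun y hy =>
    (Finset.mem_filter.mp (hLsub hy)).2
  have hQ : Qk k c ≤ (sumSet (Finset.univ : Finset (Fin k → Fin 2)) L).card :=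
    Nat.sInf_le ⟨L, hLc, rfl⟩
  refine hQ.trans ?_
  -- now show |sumSet univ L| ≤ |Im φ1|
  set S := (Finset.univ : Finset (Fin k → Fin 2)) ×ˢ L with hS
  have hsum : sumSet (Finset.univ : Finset (Fin k → Fin 2)) L
      = S.image fun p => vsum p.1 p.2 := rfl
  rw [hsum]
  unfold imCard1
  apply Finset.card_le_card_of_injOn
    (f := fun s => if h : ∃ p ∈ S, vsum p.1 p.2 = s then φ1 h.choose else 0)
  · intro s hs
    obtain ⟨p, hp, hps⟩ := Finset.mem_image.mp hs
    have h : ∃ p ∈ S, vsum p.1 p.2 = s := ⟨p, hp, hps⟩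
    simp only [dif_pos h]
    exact Finset.mem_image_of_mem φ1 (Finset.mem_univ _)
  · intro s hs s' hs' heq
    have h : ∃ p ∈ S, vsum p.1 p.2 = s := by
      obtain ⟨p, hp, hps⟩ := Finset.mem_image.mp hs; exact ⟨p, hp, hps⟩
    have h' : ∃ p ∈ S, vsum p.1 p.2 = s' := by
      obtain ⟨p, hp, hps⟩ := Finset.mem_image.mp hs'; exact ⟨p, hp, hps⟩
    simp only [dif_pos h, dif_pos h'] at heq
    obtain ⟨hpS, hps⟩ := h.choose_spec
    obtain ⟨hpS', hps'⟩ := h'.choose_spec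
    have hy : h.choose.2 ∈ L := (Finset.mem_product.mp hpS).2
    have hy' : h'.choose.2 ∈ L := (Finset.mem_product.mp hpS').2
    have hφ2 : φ2 h.choose.2 = φ2 h'.choose.2 := by
      rw [hLb _ hy, hLb _ hy']
    have := hadm h.choose.1 h'.choose.1 h.choose.2 h'.choose.2 (by simpa using heq) hφ2
    rw [← hps, ← hps']
    simpa using this
end

section
/- For any positive integer k and any admissible k-shot code (φ1, φ2) for the model (01;C1,C2;f) with m = |Im φ2|, one has |Im φ1| ≥ 3^k · m^(1 − log 3), where the exponent uses the base-2 logarithm. -/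
namespace Stmt16Aux

open Finset

/-- The key exponent `log₂ 3 - 1 = log₂ (3/2)`. -/
noncomputable def expc : ℝ := Real.logb 2 3 - 1

lemma two_rpow_logb : (2 : ℝ) ^ Real.logb 2 3 = 3 :=
  Real.rpow_logb (by norm_num) (by norm_num) (by norm_num)

lemma one_lt_logb : 1 < Real.logb 2 3 := by
  have h : (2 : ℝ) ^ (1 : ℝ) < (2 : ℝ) ^ Real.logb 2 3 := by
    rw [two_rpow_logb, Real.rpow_one]; norm_num
  exact (Real.rpow_lt_rpow_left_iff (by norm_num : (1:ℝ) < 2)).1 h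

lemma logb_lt_two : Real.logb 2 3 < 2 := by
  have h : (2 : ℝ) ^ Real.logb 2 3 < (2 : ℝ) ^ (2 : ℝ) := by
    rw [two_rpow_logb, show ((2:ℝ) : ℝ) ^ (2:ℝ) = 4 by
      rw [show (2:ℝ) = ((2:ℕ):ℝ) by norm_num, Real.rpow_natCast]; norm_num]
    norm_num
  exact (Real.rpow_lt_rpow_left_iff (by norm_num : (1:ℝ) < 2)).1 h

lemma expc_pos : 0 < expc := by
  have := one_lt_logb; unfold expc; linarith

lemma expc_lt_one : expc < 1 := by
  have := logb_lt_two; unfold expc; linarith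

lemma two_rpow_expc : (2 : ℝ) ^ expc = 3 / 2 := by
  unfold expc
  rw [Real.rpow_sub (by norm_num : (0:ℝ) < 2), two_rpow_logb, Real.rpow_one]

lemma half_rpow_expc : (1 / 2 : ℝ) ^ expc = 2 / 3 := by
  rw [show (1/2 : ℝ) = (2 : ℝ)⁻¹ by norm_num,
    Real.inv_rpow (by norm_num : (0:ℝ) ≤ 2), two_rpow_expc]
  norm_num

/-- The central elementary inequality: for `0 ≤ y ≤ x`,
`2 (x+y)^c ≤ 2 x^c + y^c`, where `c = log₂(3/2)`. -/
lemma key_ineq {x y : ℝ} (hy : 0 ≤ y) (hxy : y ≤ x) :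
    2 * (x + y) ^ expc ≤ 2 * x ^ expc + y ^ expc := by
  rcases eq_or_lt_of_le hy with h0 | hypos
  · rw [← h0, add_zero, Real.zero_rpow (ne_of_gt expc_pos), add_zero]
  have hx : (0:ℝ) < x := lt_of_lt_of_le hypos hxy
  set s : ℝ := x + y with hs
  have hspos : (0:ℝ) < s := by positivity
  set t : ℝ := y / s with ht
  have htpos : 0 < t := div_pos hypos hspos
  have hthalf : t ≤ 1 / 2 := by
    rw [ht, div_le_div_iff₀ hspos (by norm_num)]
    simp only [hs]; linarith
  have ht1 : t ≤ 1 := le_trans hthalf (by norm_num)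
  have hyst : y = s * t := by rw [ht, mul_div_assoc', eq_div_iff hspos.ne']; ring
  have hxst : x = s * (1 - t) := by
    rw [ht]; field_simp; linarith
  have hconc : ConcaveOn ℝ (Set.Ici 0) (fun z : ℝ => z ^ expc) :=
    Real.concaveOn_rpow expc_pos.le expc_lt_one.le
  -- first concavity application: (1-t)^c ≥ 1 - 2t/3
  have h1 : 1 - 2 * t / 3 ≤ (1 - t) ^ expc := by
    have := hconc.2 (Set.mem_Ici.2 (by norm_num : (0:ℝ) ≤ 1))
      (Set.mem_Ici.2 (by norm_num : (0:ℝ) ≤ 1/2))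
      (by linarith : (0:ℝ) ≤ 1 - 2 * t) (by linarith : (0:ℝ) ≤ 2 * t) (by ring)
    simp only [smul_eq_mul] at this
    rw [Real.one_rpow, half_rpow_expc] at this
    have this' : (1 - 2*t) * 1 + 2*t * (2/3) ≤ ((1 - 2*t) * 1 + 2*t * (1/2)) ^ expc := this
    calc 1 - 2 * t / 3 = (1 - 2*t) * 1 + 2*t * (2/3) := by ring
      _ ≤ ((1 - 2*t) * 1 + 2*t * (1/2)) ^ expc := this'
      _ = (1 - t) ^ expc := by congr 1; ring
  -- second concavity application: t^c ≥ 4t/3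
  have h2 : 4 * t / 3 ≤ t ^ expc := by
    have := hconc.2 (Set.mem_Ici.2 (le_refl (0:ℝ)))
      (Set.mem_Ici.2 (by norm_num : (0:ℝ) ≤ 1/2))
      (by linarith : (0:ℝ) ≤ 1 - 2 * t) (by linarith : (0:ℝ) ≤ 2 * t) (by ring)
    simp only [smul_eq_mul] at this
    rw [Real.zero_rpow (ne_of_gt expc_pos), half_rpow_expc] at this
    have this' : (1 - 2*t) * 0 + 2*t * (2/3) ≤ ((1 - 2*t) * 0 + 2*t * (1/2)) ^ expc := this
    calc 4 * t / 3 = (1 - 2*t) * 0 + 2*t * (2/3) := by ring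
      _ ≤ ((1 - 2*t) * 0 + 2*t * (1/2)) ^ expc := this'
      _ = t ^ expc := by congr 1; ring
  have hcore : 2 ≤ 2 * (1 - t) ^ expc + t ^ expc := by linarith
  have hsc : (0:ℝ) ≤ s ^ expc := Real.rpow_nonneg hspos.le _
  have hxc : x ^ expc = s ^ expc * (1 - t) ^ expc := by
    rw [hxst, Real.mul_rpow hspos.le (by linarith)]
  have hyc : y ^ expc = s ^ expc * t ^ expc := by
    rw [hyst, Real.mul_rpow hspos.le htpos.le]
  have hsums : (x + y) ^ expc = s ^ expc := by rw [← hs]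
  rw [hsums, hxc, hyc]
  nlinarith [mul_le_mul_of_nonneg_left hcore hsc]

/-- The set of componentwise sums `x + y` with `x` arbitrary and `y ∈ B`. -/
noncomputable def sums (k : ℕ) (B : Finset (Fin k → Fin 2)) : Finset (Fin k → ℕ) :=
  (Finset.univ ×ˢ B).image fun p => vsum p.1 p.2

lemma sums_nonempty {k : ℕ} {B : Finset (Fin k → Fin 2)} (hB : B.Nonempty) :
    (sums k B).Nonempty := by
  obtain ⟨y, hy⟩ := hB
  exact ⟨vsum y y, Finset.mem_image.2 ⟨(y, y), Finset.mem_product.2 ⟨Finset.mem_univ _, hy⟩, rfl⟩⟩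

/-- `Fin.cons` specialised to `ℕ`-valued tuples. -/
def consN {k : ℕ} (a : ℕ) (z : Fin k → ℕ) : Fin (k+1) → ℕ := Fin.cons a z

lemma consN_injective {k : ℕ} (a : ℕ) : Function.Injective (consN (k := k) a) := by
  intro z z' h
  funext i
  have := congrFun h i.succ
  simpa [consN, Fin.cons_succ] using this

/-- `Fin.tail` specialised to binary tuples. -/
def tail2 {k : ℕ} (y : Fin (k+1) → Fin 2) : Fin k → Fin 2 := Fin.tail y

lemma vsum_cons {k : ℕ} (x0 : Fin 2) (x : Fin k → Fin 2) (y : Fin (k+1) → Fin 2) :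
    vsum (Fin.cons x0 x) y = Fin.cons ((x0 : ℕ) + (y 0 : ℕ)) (vsum x (tail2 y)) := by
  funext i
  refine Fin.cases ?_ (fun j => ?_) i
  · simp [vsum, Fin.cons_zero]
  · simp [vsum, Fin.cons_succ, tail2, Fin.tail]

/-- Membership of lifted sums. -/
lemma cons_mem_sums {k : ℕ} {B : Finset (Fin (k+1) → Fin 2)} {v : Fin 2}
    {z : Fin k → ℕ}
    (hz : z ∈ sums k ((B.filter fun y => y 0 = v).image tail2)) (x0 : Fin 2) :
    Fin.cons ((x0 : ℕ) + (v : ℕ)) z ∈ sums (k+1) B := by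
  obtain ⟨p, hp, hzp⟩ := Finset.mem_image.1 hz
  obtain ⟨-, hp2⟩ := Finset.mem_product.1 hp
  obtain ⟨y, hy, hty⟩ := Finset.mem_image.1 hp2
  obtain ⟨hyB, hy0⟩ := Finset.mem_filter.1 hy
  refine Finset.mem_image.2 ⟨(Fin.cons x0 p.1, y), Finset.mem_product.2 ⟨Finset.mem_univ _, hyB⟩, ?_⟩
  show vsum (Fin.cons x0 p.1) y = _
  rw [vsum_cons, hy0, hty, hzp]

lemma cons_disj {k : ℕ} {a b : ℕ} (hab : a ≠ b) (S T : Finset (Fin k → ℕ)) :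
    Disjoint (S.image (consN a)) (T.image (consN b)) := by
  rw [Finset.disjoint_left]
  rintro w hw hw'
  obtain ⟨z, -, rfl⟩ := Finset.mem_image.1 hw
  obtain ⟨z', -, he⟩ := Finset.mem_image.1 hw'
  exact hab (by simpa [consN] using (congrFun he 0).symm)

lemma card_filter_tail_add {k : ℕ} (B : Finset (Fin (k+1) → Fin 2)) :
    B.card = ((B.filter fun y => y 0 = 0).image tail2).card
      + ((B.filter fun y => y 0 = 1).image tail2).card := by
  have hinj : ∀ v : Fin 2, Set.InjOn (tail2 (k := k)) ↑(B.filter fun y => y 0 = v) := by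
    intro v y hy y' hy' he
    have h0 : y 0 = y' 0 := by
      rw [(Finset.mem_filter.1 hy).2, (Finset.mem_filter.1 hy').2]
    calc y = Fin.cons (y 0) (tail2 y) := (Fin.cons_self_tail y).symm
      _ = Fin.cons (y' 0) (tail2 y') := by rw [h0, he]
      _ = y' := Fin.cons_self_tail y'
  rw [Finset.card_image_of_injOn (hinj 0), Finset.card_image_of_injOn (hinj 1)]
  have : (B.filter fun y => y 0 = 1) = B.filter fun y => ¬ (y 0 = 0) := by
    apply Finset.filter_congr
    intro y _
    have hv : ∀ v : Fin 2, (v = 1) ↔ ¬ (v = 0) := by decide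
    exact hv (y 0)
  rw [this]
  exact (Finset.card_filter_add_card_filter_not (s := B) (fun y : Fin (k+1) → Fin 2 => y 0 = 0)).symm

/-- Main combinatorial lemma: `|{0,1}^k + B| ≥ 2^k |B|^c` with `c = log₂(3/2)`. -/
lemma sums_card_bound : ∀ (k : ℕ) (B : Finset (Fin k → Fin 2)), B.Nonempty →
    (2 : ℝ) ^ k * (B.card : ℝ) ^ expc ≤ ((sums k B).card : ℝ) := by
  intro k
  induction k with
  | zero =>
    intro B hB
    have hcard : B.card = 1 := by
      have h1 : B.card ≤ 1 := by
        have := Finset.card_le_univ B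
        simpa using this
      have h2 : 1 ≤ B.card := Finset.card_pos.2 hB
      omega
    have hs : 1 ≤ ((sums 0 B).card : ℝ) := by
      exact_mod_cast Finset.card_pos.2 (sums_nonempty hB)
    rw [hcard]
    simpa using hs
  | succ k ih =>
    intro B hB
    set B0 := (B.filter fun y => y 0 = 0).image tail2 with hB0
    set B1 := (B.filter fun y => y 0 = 1).image tail2 with hB1
    have hcard : B.card = B0.card + B1.card := card_filter_tail_add B
    set S0 := sums k B0 with hS0
    set S1 := sums k B1 with hS1
    -- three disjoint copies inside sums (k+1) B
    have hsub : (S0.image (consN 0) ∪ (S0 ∪ S1).image (consN 1) ∪ S1.image (consN 2))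
        ⊆ sums (k+1) B := by
      intro w hw
      rcases Finset.mem_union.1 hw with hw | hw
      · rcases Finset.mem_union.1 hw with hw | hw
        · obtain ⟨z, hz, rfl⟩ := Finset.mem_image.1 hw
          simpa [consN] using cons_mem_sums (v := 0) hz 0
        · obtain ⟨z, hz, rfl⟩ := Finset.mem_image.1 hw
          rcases Finset.mem_union.1 hz with hz | hz
          · simpa [consN] using cons_mem_sums (v := 0) hz 1
          · simpa [consN] using cons_mem_sums (v := 1) hz 0
      · obtain ⟨z, hz, rfl⟩ := Finset.mem_image.1 hw
        simpa [consN] using cons_mem_sums (v := 1) hz 1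
    have hcards : S0.card + (S0 ∪ S1).card + S1.card ≤ (sums (k+1) B).card := by
      have hd01 : Disjoint (S0.image (consN 0)) ((S0 ∪ S1).image (consN 1)) :=
        cons_disj (by norm_num) _ _
      have hd02 : Disjoint (S0.image (consN 0)) (S1.image (consN 2)) :=
        cons_disj (by norm_num) _ _
      have hd12 : Disjoint ((S0 ∪ S1).image (consN 1)) (S1.image (consN 2)) :=
        cons_disj (by norm_num) _ _
      have := Finset.card_le_card hsub
      rw [Finset.card_union_of_disjoint (Finset.disjoint_union_left.2 ⟨hd02, hd12⟩),
        Finset.card_union_of_disjoint hd01] at this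
      rw [Finset.card_image_of_injective _ (consN_injective _),
        Finset.card_image_of_injective _ (consN_injective _),
        Finset.card_image_of_injective _ (consN_injective _)] at this
      linarith
    have hc0 : (0:ℝ) ≤ expc := expc_pos.le
    -- case analysis on emptiness
    rcases Finset.eq_empty_or_nonempty B1 with h1e | h1ne
    · -- B1 empty
      have h0ne : B0.Nonempty := by
        rcases Finset.eq_empty_or_nonempty B0 with h0e | h
        · exfalso
          have : B.card = 0 := by rw [hcard, h0e, h1e]; simp
          exact Finset.card_ne_zero_of_mem hB.choose_spec this
        · exact h
      have hIH := ih B0 h0ne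
      have hS1e : S1 = ∅ := by rw [hS1, h1e]; simp [sums]
      have hU : (S0 ∪ S1).card = S0.card := by rw [hS1e]; simp
      have hBc : (B.card : ℝ) = (B0.card : ℝ) := by
        rw [hcard, h1e]; simp
      rw [hBc]
      calc (2:ℝ) ^ (k+1) * (B0.card : ℝ) ^ expc
          = 2 * ((2:ℝ) ^ k * (B0.card : ℝ) ^ expc) := by ring
        _ ≤ 2 * (S0.card : ℝ) := by linarith
        _ ≤ ((sums (k+1) B).card : ℝ) := by
            have : S0.card + S0.card ≤ (sums (k+1) B).card := by
              rw [hS1e] at hcards; simpa using hcards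
            push_cast
            exact_mod_cast by push_cast; linarith [this]
    rcases Finset.eq_empty_or_nonempty B0 with h0e | h0ne
    · -- B0 empty
      have hIH := ih B1 h1ne
      have hS0e : S0 = ∅ := by rw [hS0, h0e]; simp [sums]
      have hBc : (B.card : ℝ) = (B1.card : ℝ) := by
        rw [hcard, h0e]; simp
      rw [hBc]
      have hcc : S1.card + S1.card ≤ (sums (k+1) B).card := by
        rw [hS0e] at hcards; simpa using hcards
      calc (2:ℝ) ^ (k+1) * (B1.card : ℝ) ^ expc
          = 2 * ((2:ℝ) ^ k * (B1.card : ℝ) ^ expc) := by ring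
        _ ≤ 2 * (S1.card : ℝ) := by linarith
        _ ≤ ((sums (k+1) B).card : ℝ) := by exact_mod_cast by push_cast; linarith [hcc]
    · -- both nonempty
      have hIH0 := ih B0 h0ne
      have hIH1 := ih B1 h1ne
      have hp : (0:ℝ) < (B0.card : ℝ) := by exact_mod_cast Finset.card_pos.2 h0ne
      have hq : (0:ℝ) < (B1.card : ℝ) := by exact_mod_cast Finset.card_pos.2 h1ne
      have hBc : (B.card : ℝ) = (B0.card : ℝ) + (B1.card : ℝ) := by
        rw [hcard]; push_cast; ring
      rw [hBc]
      have hU0 : (S0.card : ℝ) ≤ ((S0 ∪ S1).card : ℝ) := by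
        exact_mod_cast Finset.card_le_card Finset.subset_union_left
      have hU1 : (S1.card : ℝ) ≤ ((S0 ∪ S1).card : ℝ) := by
        exact_mod_cast Finset.card_le_card Finset.subset_union_right
      have hcardsR : (S0.card : ℝ) + ((S0 ∪ S1).card : ℝ) + (S1.card : ℝ)
          ≤ ((sums (k+1) B).card : ℝ) := by exact_mod_cast hcards
      rcases le_total ((B1.card : ℝ)) ((B0.card : ℝ)) with hle | hle
      · have hkey := key_ineq (x := (B0.card : ℝ)) (y := (B1.card : ℝ)) hq.le hle
        calc (2:ℝ) ^ (k+1) * ((B0.card : ℝ) + (B1.card : ℝ)) ^ expc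
            = (2:ℝ)^k * (2 * ((B0.card : ℝ) + (B1.card : ℝ)) ^ expc) := by ring
          _ ≤ (2:ℝ)^k * (2 * (B0.card : ℝ) ^ expc + (B1.card : ℝ) ^ expc) := by
              apply mul_le_mul_of_nonneg_left hkey (by positivity)
          _ = 2 * ((2:ℝ)^k * (B0.card : ℝ) ^ expc) + (2:ℝ)^k * (B1.card : ℝ) ^ expc := by ring
          _ ≤ 2 * (S0.card : ℝ) + (S1.card : ℝ) := by linarith
          _ ≤ (S0.card : ℝ) + ((S0 ∪ S1).card : ℝ) + (S1.card : ℝ) := by linarith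
          _ ≤ ((sums (k+1) B).card : ℝ) := hcardsR
      · have hkey := key_ineq (x := (B1.card : ℝ)) (y := (B0.card : ℝ)) hp.le hle
        calc (2:ℝ) ^ (k+1) * ((B0.card : ℝ) + (B1.card : ℝ)) ^ expc
            = (2:ℝ)^k * (2 * ((B1.card : ℝ) + (B0.card : ℝ)) ^ expc) := by ring_nf
          _ ≤ (2:ℝ)^k * (2 * (B1.card : ℝ) ^ expc + (B0.card : ℝ) ^ expc) := by
              apply mul_le_mul_of_nonneg_left hkey (by positivity)
          _ = 2 * ((2:ℝ)^k * (B1.card : ℝ) ^ expc) + (2:ℝ)^k * (B0.card : ℝ) ^ expc := by ring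
          _ ≤ 2 * (S1.card : ℝ) + (S0.card : ℝ) := by linarith
          _ ≤ (S0.card : ℝ) + ((S0 ∪ S1).card : ℝ) + (S1.card : ℝ) := by linarith
          _ ≤ ((sums (k+1) B).card : ℝ) := hcardsR

end Stmt16Aux

theorem imCard1_lower_bound (k : ℕ) (hk : 0 < k)
    (φ1 : (Fin k → Fin 2) × (Fin k → Fin 2) → ℕ) (φ2 : (Fin k → Fin 2) → ℕ)
    (hadm : Admissible01 φ1 φ2) :
    (3 : ℝ) ^ k * (imCard2 φ2 : ℝ) ^ (1 - Real.logb 2 3) ≤ (imCard1 φ1 : ℝ) := by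
  classical
  open Stmt16Aux Finset in
  -- pick the largest fiber of φ2
  set I : Finset ℕ := Finset.univ.image φ2 with hI
  have hIne : I.Nonempty := by
    refine ⟨φ2 (fun _ => 0), Finset.mem_image.2 ⟨_, Finset.mem_univ _, rfl⟩⟩
  obtain ⟨t0, ht0I, ht0max⟩ := Finset.exists_max_image I
    (fun t => (Finset.univ.filter fun y => φ2 y = t).card) hIne
  set B : Finset (Fin k → Fin 2) := Finset.univ.filter fun y => φ2 y = t0 with hBdef
  have hBne : B.Nonempty := by
    obtain ⟨y0, -, hy0⟩ := Finset.mem_image.1 ht0I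
    exact ⟨y0, Finset.mem_filter.2 ⟨Finset.mem_univ _, hy0⟩⟩
  set m : ℕ := imCard2 φ2 with hm
  have hmI : m = I.card := rfl
  have hmpos : 0 < m := by rw [hmI]; exact Finset.card_pos.2 hIne
  -- 2^k ≤ m * B.card
  have hfib : 2 ^ k ≤ m * B.card := by
    have hcardU : (Finset.univ : Finset (Fin k → Fin 2)).card = 2 ^ k := by
      simp [Finset.card_univ]
    have hsum : (Finset.univ : Finset (Fin k → Fin 2)).card
        = ∑ t ∈ I, (Finset.univ.filter fun y => φ2 y = t).card :=
      Finset.card_eq_sum_card_image φ2 Finset.univ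
    have hle : ∑ t ∈ I, (Finset.univ.filter fun y => φ2 y = t).card
        ≤ ∑ _t ∈ I, B.card := Finset.sum_le_sum fun t ht => ht0max t ht
    rw [Finset.sum_const, smul_eq_mul, ← hmI] at hle
    omega
  -- card of sums of B is at most imCard1
  have hsumsle : ((sums k B).card : ℝ) ≤ (imCard1 φ1 : ℝ) := by
    have hCsub : ((Finset.univ ×ˢ B).image φ1) ⊆ Finset.univ.image φ1 :=
      Finset.image_subset_image (Finset.subset_univ _)
    have hsurj : ∃ σ : ℕ → (Fin k → ℕ),
        Set.SurjOn σ ↑((Finset.univ ×ˢ B).image φ1) ↑(sums k B) := by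
      refine ⟨fun c =>
        if h : ∃ p : (Fin k → Fin 2) × (Fin k → Fin 2), p ∈ Finset.univ ×ˢ B ∧ φ1 p = c
        then vsum h.choose.1 h.choose.2 else fun _ => 0, ?_⟩
      intro z hz
      obtain ⟨p, hp, hzp⟩ := Finset.mem_image.1 (by exact_mod_cast hz)
      have hex : ∃ q : (Fin k → Fin 2) × (Fin k → Fin 2),
          q ∈ Finset.univ ×ˢ B ∧ φ1 q = φ1 p := ⟨p, hp, rfl⟩
      refine ⟨φ1 p, ?_, ?_⟩
      · exact_mod_cast Finset.mem_image.2 ⟨p, hp, rfl⟩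
      · simp only [dif_pos hex]
        obtain ⟨hqmem, hqeq⟩ := hex.choose_spec
        set q := hex.choose
        have hqB : q.2 ∈ B := (Finset.mem_product.1 hqmem).2
        have hpB : p.2 ∈ B := (Finset.mem_product.1 hp).2
        have hφ2 : φ2 q.2 = φ2 p.2 := by
          rw [(Finset.mem_filter.1 hqB).2, (Finset.mem_filter.1 hpB).2]
        have := hadm q.1 p.1 q.2 p.2 (by rwa [Prod.mk.eta, Prod.mk.eta]) hφ2
        rw [this, ← hzp]
    obtain ⟨σ, hσ⟩ := hsurj
    have h1 : (sums k B).card ≤ ((Finset.univ ×ˢ B).image φ1).card :=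
      Finset.card_le_card_of_surjOn σ hσ
    have h2 : ((Finset.univ ×ˢ B).image φ1).card ≤ imCard1 φ1 :=
      Finset.card_le_card hCsub
    exact_mod_cast le_trans h1 h2
  -- chain of inequalities
  have hmain := sums_card_bound k B hBne
  have hBreal : ((2:ℝ)^k) / (m : ℝ) ≤ (B.card : ℝ) := by
    rw [div_le_iff₀ (by exact_mod_cast hmpos)]
    calc ((2:ℝ)^k) = ((2^k : ℕ) : ℝ) := by push_cast; ring
      _ ≤ ((m * B.card : ℕ) : ℝ) := by exact_mod_cast hfib
      _ = (B.card : ℝ) * (m : ℝ) := by push_cast; ring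
  have hrpow : ((2:ℝ)^k / (m:ℝ)) ^ expc ≤ (B.card : ℝ) ^ expc :=
    Real.rpow_le_rpow (by positivity) hBreal expc_pos.le
  have hfinal : (3:ℝ)^k * (m : ℝ) ^ (1 - Real.logb 2 3) ≤ (2:ℝ)^k * (B.card : ℝ) ^ expc := by
    have heq : (3:ℝ)^k * (m : ℝ) ^ (1 - Real.logb 2 3)
        = (2:ℝ)^k * ((2:ℝ)^k / (m:ℝ)) ^ expc := by
      have hA : ((2:ℝ)^k) ^ expc = ((3:ℝ)/2) ^ k := by
        rw [← Real.rpow_natCast 2 k, ← Real.rpow_mul (by norm_num : (0:ℝ) ≤ 2), mul_comm,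
          Real.rpow_mul (by norm_num : (0:ℝ) ≤ 2), two_rpow_expc, Real.rpow_natCast]
      have hB : (m : ℝ) ^ (1 - Real.logb 2 3) = ((m : ℝ) ^ expc)⁻¹ := by
        rw [show (1:ℝ) - Real.logb 2 3 = -expc by unfold expc; ring,
          Real.rpow_neg (by positivity)]
      have hmc : (0:ℝ) < (m : ℝ) ^ expc := Real.rpow_pos_of_pos (by exact_mod_cast hmpos) _
      rw [Real.div_rpow (by positivity) (by positivity), hA, hB]
      rw [div_eq_mul_inv, ← mul_assoc, ← mul_pow]
      norm_num
    rw [heq]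
    exact mul_le_mul_of_nonneg_left hrpow (by positivity)
  calc (3:ℝ)^k * (m : ℝ) ^ (1 - Real.logb 2 3)
      ≤ (2:ℝ)^k * (B.card : ℝ) ^ expc := hfinal
    _ ≤ ((sums k B).card : ℝ) := hmain
    _ ≤ (imCard1 φ1 : ℝ) := hsumsle
end

section
/- For any positive integers k and k1 with 1 ≤ k1 ≤ k, there exists an admissible k-shot code (φ1, φ2) for the model (01;C1,C2;f) such that |Im φ1| = 3^(k1−1) · 2^(k−k1+1) and |Im φ2| = 2^(k−k1+1). (It is given by φ1(x, y) = (x_1+y_1, …, x_{k1−1}+y_{k1−1}, x_{k1}, …, x_k) and φ2(y) = (0, …, 0, y_{k1}, …, y_k).) -/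
lemma card_image_inj_surj {α β : Type*} [Fintype α] [Fintype β] [DecidableEq β]
    (g : α → β) (e : β → ℕ) (hg : Function.Surjective g) (he : Function.Injective e) :
    (Finset.univ.image (fun a => e (g a))).card = Fintype.card β := by
  have h : (fun a => e (g a)) = e ∘ g := rfl
  rw [h, ← Finset.image_image, Finset.image_univ_of_surjective hg,
    Finset.card_image_of_injective _ he, Finset.card_univ]

theorem exists_code_01 (k k1 : ℕ) (hk1 : 1 ≤ k1) (hk1' : k1 ≤ k) :
    ∃ (φ1 : (Fin k → Fin 2) × (Fin k → Fin 2) → ℕ) (φ2 : (Fin k → Fin 2) → ℕ),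
      Admissible01 φ1 φ2 ∧
      imCard1 φ1 = 3 ^ (k1 - 1) * 2 ^ (k - k1 + 1) ∧
      imCard2 φ2 = 2 ^ (k - k1 + 1) := by
  set m := k1 - 1 with hm
  set n := k - k1 + 1 with hn
  have hmn : m + n = k := by omega
  -- index embeddings
  let ι1 : Fin m → Fin k := fun j => ⟨(j : ℕ), by omega⟩
  let ι2 : Fin n → Fin k := fun j => ⟨m + (j : ℕ), by omega⟩
  -- the combining maps
  let g : ((Fin k → Fin 2) × (Fin k → Fin 2)) → (Fin m → Fin 3) × (Fin n → Fin 2) :=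
    fun p => (fun j => ⟨(p.1 (ι1 j) : ℕ) + (p.2 (ι1 j) : ℕ), by
        have h1 := (p.1 (ι1 j)).isLt
        have h2 := (p.2 (ι1 j)).isLt
        omega⟩,
      fun j => p.1 (ι2 j))
  let g2 : (Fin k → Fin 2) → (Fin n → Fin 2) := fun y j => y (ι2 j)
  -- injective encodings into ℕ
  let e1 : ((Fin m → Fin 3) × (Fin n → Fin 2)) → ℕ := fun z => (Fintype.equivFin _ z : ℕ)
  let e2 : (Fin n → Fin 2) → ℕ := fun z => (Fintype.equivFin _ z : ℕ)
  have he1 : Function.Injective e1 := fun a b h =>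
    (Fintype.equivFin _).injective (Fin.val_injective h)
  have he2 : Function.Injective e2 := fun a b h =>
    (Fintype.equivFin _).injective (Fin.val_injective h)
  -- surjectivity of g
  have hg : Function.Surjective g := by
    rintro ⟨u, v⟩
    refine ⟨(fun i => if h : (i : ℕ) < m then (if (u ⟨i, h⟩ : ℕ) = 0 then 0 else 1)
        else v ⟨(i : ℕ) - m, by have := i.isLt; omega⟩,
      fun i => if h : (i : ℕ) < m then (if (u ⟨i, h⟩ : ℕ) = 2 then 1 else 0) else 0), ?_⟩
    refine Prod.ext ?_ ?_
    · funext j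
      apply Fin.ext
      have hj : ((ι1 j : Fin k) : ℕ) < m := j.isLt
      simp only [g, dif_pos hj]
      have hjj : (⟨((ι1 j : Fin k) : ℕ), hj⟩ : Fin m) = j := rfl
      rw [hjj]
      have h3 := (u j).isLt
      split_ifs <;> simp_all <;> omega
    · funext j
      have hj : ¬ ((ι2 j : Fin k) : ℕ) < m := by simp [ι2]
      simp only [g, dif_neg hj]
      congr 1
      apply Fin.ext
      show ((ι2 j : Fin k) : ℕ) - m = (j : ℕ)
      simp [ι2]
  -- surjectivity of g2
  have hg2 : Function.Surjective g2 := by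
    intro v
    refine ⟨fun i => if h : (i : ℕ) < m then 0 else v ⟨(i : ℕ) - m, by have := i.isLt; omega⟩, ?_⟩
    funext j
    have hj : ¬ ((ι2 j : Fin k) : ℕ) < m := by simp [ι2]
    simp only [g2, dif_neg hj]
    congr 1
    apply Fin.ext
    show ((ι2 j : Fin k) : ℕ) - m = (j : ℕ)
    simp [ι2]
  refine ⟨fun p => e1 (g p), fun y => e2 (g2 y), ?_, ?_, ?_⟩
  · -- admissibility
    intro x x' y y' h1 h2
    have hgeq : g (x, y) = g (x', y') := he1 h1
    have hgeq2 : g2 y = g2 y' := he2 h2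
    funext i
    by_cases h : (i : ℕ) < m
    · have := congrFun (congrArg Prod.fst hgeq) ⟨(i : ℕ), h⟩
      have hval := congrArg Fin.val this
      have hi : ι1 ⟨(i : ℕ), h⟩ = i := Fin.ext rfl
      simpa [g, hi, vsum] using hval
    · have hin : ι2 ⟨(i : ℕ) - m, by have := i.isLt; omega⟩ = i := by
        apply Fin.ext; show m + ((i : ℕ) - m) = (i : ℕ); omega
      have hx := congrFun (congrArg Prod.snd hgeq) ⟨(i : ℕ) - m, by have := i.isLt; omega⟩
      have hy := congrFun hgeq2 ⟨(i : ℕ) - m, by have := i.isLt; omega⟩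
      simp only [g, g2, hin] at hx hy
      simp [vsum, hx, hy]
  · -- cardinality of Im φ1
    rw [imCard1, card_image_inj_surj g e1 hg he1]
    simp [Fintype.card_fun]
  · rw [imCard2, card_image_inj_surj g2 e2 hg2 he2]
    simp [Fintype.card_fun]
end
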